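/- Let σ : ℝ → ℝ be slope-restricted on [0,1]. Let A ∈ ℝ^{n×n}, B ∈ ℝ^{n×c₋}, C ∈ ℝ^{c×n}, D ∈ ℝ^{c×c₋}, b ∈ ℝ^c. Let P ∈ ℝ^{n×n} be symmetric positive definite, let X₋ ∈ ℝ^{c₋×c₋} and X ∈ ℝ^{c×c} be symmetric positive definite, and let Λ ∈ ℝ^{c×c} be diagonal with positive diagonal entries. Suppose the block matrix [[P − Aᵀ P A, −Aᵀ P B, −Cᵀ Λ], [−Bᵀ P A, X₋ − Bᵀ P B, −Dᵀ Λ], [−Λ C, −Λ D, 2Λ − X]] is positive semidefinite. For any two input sequences u^a, u^b : ℕ → ℝ^{c₋}, define the corresponding state sequences by x^a[0] = x^b[0] = 0 and x[i+1] = A x[i] + B u[i], and outputs y[i] = σ(C x[i] + D u[i] + b) (σ applied entrywise). Then for every N ∈ ℕ, Σ_{i=0}^{N−1} (y^a[i] − y^b[i])ᵀ X (y^a[i] − y^b[i]) ≤ Σ_{i=0}^{N−1} (u^a[i] − u^b[i])ᵀ X₋ (u^a[i] − u^b[i]). -/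

import Mathlib

open Matrix Finset


lemma symm_dot {k : ℕ} (M : Matrix (Fin k) (Fin k) ℝ) (hM : Mᵀ = M)
    (u v : Fin k → ℝ) : u ⬝ᵥ M *ᵥ v = v ⬝ᵥ M *ᵥ u := by
  rw [Matrix.dotProduct_mulVec, ← Matrix.mulVec_transpose, hM, dotProduct_comm]

lemma quad_expand {n cm c : ℕ}
    (A : Matrix (Fin n) (Fin n) ℝ) (B : Matrix (Fin n) (Fin cm) ℝ)
    (C : Matrix (Fin c) (Fin n) ℝ) (D : Matrix (Fin c) (Fin cm) ℝ)
    (P : Matrix (Fin n) (Fin n) ℝ)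
    (Xm : Matrix (Fin cm) (Fin cm) ℝ)
    (X : Matrix (Fin c) (Fin c) ℝ)
    (Λ : Matrix (Fin c) (Fin c) ℝ)
    (hLMI : (Matrix.fromBlocks
      (Matrix.fromBlocks (P - Aᵀ * P * A) (-(Aᵀ * P * B))
        (-(Bᵀ * P * A)) (Xm - Bᵀ * P * B))
      (Matrix.fromRows (-(Cᵀ * Λ)) (-(Dᵀ * Λ)))
      (Matrix.fromCols (-(Λ * C)) (-(Λ * D)))
      ((2 : ℝ) • Λ - X)).PosSemidef)
    (dx : Fin n → ℝ) (du : Fin cm → ℝ) (dy : Fin c → ℝ) :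
    0 ≤ dx ⬝ᵥ (P - Aᵀ * P * A) *ᵥ dx + dx ⬝ᵥ (-(Aᵀ * P * B)) *ᵥ du
      + dx ⬝ᵥ (-(Cᵀ * Λ)) *ᵥ dy
      + du ⬝ᵥ (-(Bᵀ * P * A)) *ᵥ dx + du ⬝ᵥ (Xm - Bᵀ * P * B) *ᵥ du
      + du ⬝ᵥ (-(Dᵀ * Λ)) *ᵥ dy
      + dy ⬝ᵥ (-(Λ * C)) *ᵥ dx + dy ⬝ᵥ (-(Λ * D)) *ᵥ du
      + dy ⬝ᵥ ((2 : ℝ) • Λ - X) *ᵥ dy := by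
  have h := hLMI.dotProduct_mulVec_nonneg (Sum.elim (Sum.elim dx du) dy)
  simp only [Matrix.fromBlocks_mulVec, Matrix.fromRows_mulVec,
    Matrix.fromCols_mulVec_sumElim, sumElim_dotProduct_sumElim,
    dotProduct_add, Sum.elim_add_add, Sum.elim_comp_inl, Sum.elim_comp_inr, RCLike.re_to_real, star_trivial] at h
  linarith

lemma trans_dot {k l m : ℕ} (E : Matrix (Fin k) (Fin l) ℝ)
    (M : Matrix (Fin k) (Fin m) ℝ) (u : Fin l → ℝ) (w : Fin m → ℝ) :
    u ⬝ᵥ (Eᵀ * M) *ᵥ w = (E *ᵥ u) ⬝ᵥ M *ᵥ w := by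
  conv_lhs => rw [← Matrix.mulVec_mulVec, Matrix.dotProduct_mulVec,
    Matrix.vecMul_transpose]

lemma step_ineq {n cm c : ℕ}
    (A : Matrix (Fin n) (Fin n) ℝ) (B : Matrix (Fin n) (Fin cm) ℝ)
    (C : Matrix (Fin c) (Fin n) ℝ) (D : Matrix (Fin c) (Fin cm) ℝ)
    (P : Matrix (Fin n) (Fin n) ℝ) (hP : Pᵀ = P)
    (Xm : Matrix (Fin cm) (Fin cm) ℝ)
    (X : Matrix (Fin c) (Fin c) ℝ)
    (d : Fin c → ℝ) (hd : ∀ i, 0 < d i)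
    (Λ : Matrix (Fin c) (Fin c) ℝ) (hΛ : Λ = Matrix.diagonal d)
    (hLMI : (Matrix.fromBlocks
      (Matrix.fromBlocks (P - Aᵀ * P * A) (-(Aᵀ * P * B))
        (-(Bᵀ * P * A)) (Xm - Bᵀ * P * B))
      (Matrix.fromRows (-(Cᵀ * Λ)) (-(Dᵀ * Λ)))
      (Matrix.fromCols (-(Λ * C)) (-(Λ * D)))
      ((2 : ℝ) • Λ - X)).PosSemidef)
    (dx : Fin n → ℝ) (du : Fin cm → ℝ) (dy : Fin c → ℝ)
    (hslope : ∀ j, 0 ≤ dy j * ((C *ᵥ dx + D *ᵥ du) j - dy j)) :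
    dy ⬝ᵥ X *ᵥ dy ≤ du ⬝ᵥ Xm *ᵥ du + dx ⬝ᵥ P *ᵥ dx
      - (A *ᵥ dx + B *ᵥ du) ⬝ᵥ P *ᵥ (A *ᵥ dx + B *ᵥ du) := by
  have hquad := quad_expand A B C D P Xm X Λ hLMI dx du dy
  -- slope term
  have hT : 0 ≤ dy ⬝ᵥ Λ *ᵥ (C *ᵥ dx + D *ᵥ du - dy) := by
    rw [hΛ]
    refine Finset.sum_nonneg fun j _ => ?_
    rw [Matrix.mulVec_diagonal]
    have := hslope j
    have := (hd j).le
    simp only [Pi.sub_apply]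
    nlinarith
  -- rewrite transposed blocks
  have e1 : dx ⬝ᵥ (Aᵀ * P * A) *ᵥ dx = (A *ᵥ dx) ⬝ᵥ P *ᵥ (A *ᵥ dx) := by
    rw [Matrix.mul_assoc, trans_dot, Matrix.mulVec_mulVec]
  have e2 : dx ⬝ᵥ (Aᵀ * P * B) *ᵥ du = (A *ᵥ dx) ⬝ᵥ P *ᵥ (B *ᵥ du) := by
    rw [Matrix.mul_assoc, trans_dot, Matrix.mulVec_mulVec]
  have e3 : du ⬝ᵥ (Bᵀ * P * A) *ᵥ dx = (B *ᵥ du) ⬝ᵥ P *ᵥ (A *ᵥ dx) := by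
    rw [Matrix.mul_assoc, trans_dot, Matrix.mulVec_mulVec]
  have e4 : du ⬝ᵥ (Bᵀ * P * B) *ᵥ du = (B *ᵥ du) ⬝ᵥ P *ᵥ (B *ᵥ du) := by
    rw [Matrix.mul_assoc, trans_dot, Matrix.mulVec_mulVec]
  have e5 : dx ⬝ᵥ (Cᵀ * Λ) *ᵥ dy = (C *ᵥ dx) ⬝ᵥ Λ *ᵥ dy := by
    rw [trans_dot]
  have e6 : du ⬝ᵥ (Dᵀ * Λ) *ᵥ dy = (D *ᵥ du) ⬝ᵥ Λ *ᵥ dy := by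
    rw [trans_dot]
  have hΛsymm : Λᵀ = Λ := by rw [hΛ]; exact Matrix.diagonal_transpose d
  have e7 : dy ⬝ᵥ (Λ * C) *ᵥ dx = (C *ᵥ dx) ⬝ᵥ Λ *ᵥ dy := by
    rw [← Matrix.mulVec_mulVec, symm_dot Λ hΛsymm]
  have e8 : dy ⬝ᵥ (Λ * D) *ᵥ du = (D *ᵥ du) ⬝ᵥ Λ *ᵥ dy := by
    rw [← Matrix.mulVec_mulVec, symm_dot Λ hΛsymm]
  have hPsym : (B *ᵥ du) ⬝ᵥ P *ᵥ (A *ᵥ dx) = (A *ᵥ dx) ⬝ᵥ P *ᵥ (B *ᵥ du) :=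
    symm_dot P hP _ _
  -- expand everything
  simp only [Matrix.sub_mulVec, Matrix.neg_mulVec, dotProduct_sub, dotProduct_neg,
    Matrix.smul_mulVec, dotProduct_smul, smul_eq_mul] at hquad ⊢
  rw [e1, e2, e3, e4, e5, e6, e7, e8, hPsym] at hquad
  simp only [Matrix.mulVec_add, Matrix.mulVec_sub, dotProduct_add,
    add_dotProduct, dotProduct_sub] at hquad hT ⊢
  have f1 : C *ᵥ dx ⬝ᵥ Λ *ᵥ dy = dy ⬝ᵥ Λ *ᵥ (C *ᵥ dx) := symm_dot Λ hΛsymm _ _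
  have f2 : D *ᵥ du ⬝ᵥ Λ *ᵥ dy = dy ⬝ᵥ Λ *ᵥ (D *ᵥ du) := symm_dot Λ hΛsymm _ _
  linarith


/-- The 3×3 block LMI certificate implies incremental
dissipativity (with supply given by input weight `X₋` and output weight `X`)
of a 1-D convolutional layer realized in state space
`x[i+1] = A x[i] + B u[i]`, `y[i] = σ(C x[i] + D u[i] + b)` (zero initial
state, `σ` slope-restricted applied entrywise). -/
theorem conv_state_space_LMI_implies_incremental_dissipativity
    (n cm c : ℕ) (σ : ℝ → ℝ)
    (hσ : ∀ a b : ℝ, 0 ≤ (σ a - σ b) * ((a - b) - (σ a - σ b)))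
    (A : Matrix (Fin n) (Fin n) ℝ) (B : Matrix (Fin n) (Fin cm) ℝ)
    (C : Matrix (Fin c) (Fin n) ℝ) (D : Matrix (Fin c) (Fin cm) ℝ)
    (b : Fin c → ℝ)
    (P : Matrix (Fin n) (Fin n) ℝ) (hP : P.PosDef)
    (Xm : Matrix (Fin cm) (Fin cm) ℝ) (hXm : Xm.PosDef)
    (X : Matrix (Fin c) (Fin c) ℝ) (hX : X.PosDef)
    (d : Fin c → ℝ) (hd : ∀ i, 0 < d i)
    (Λ : Matrix (Fin c) (Fin c) ℝ) (hΛ : Λ = Matrix.diagonal d)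
    (hLMI : (Matrix.fromBlocks
      (Matrix.fromBlocks (P - Aᵀ * P * A) (-(Aᵀ * P * B))
        (-(Bᵀ * P * A)) (Xm - Bᵀ * P * B))
      (Matrix.fromRows (-(Cᵀ * Λ)) (-(Dᵀ * Λ)))
      (Matrix.fromCols (-(Λ * C)) (-(Λ * D)))
      ((2 : ℝ) • Λ - X)).PosSemidef)
    (ua ub : ℕ → Fin cm → ℝ)
    (xa xb : ℕ → Fin n → ℝ)
    (hxa0 : xa 0 = 0) (hxb0 : xb 0 = 0)
    (hxa : ∀ i, xa (i + 1) = A *ᵥ xa i + B *ᵥ ua i)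
    (hxb : ∀ i, xb (i + 1) = A *ᵥ xb i + B *ᵥ ub i)
    (ya yb : ℕ → Fin c → ℝ)
    (hya : ∀ i, ya i = fun j => σ ((C *ᵥ xa i + D *ᵥ ua i + b) j))
    (hyb : ∀ i, yb i = fun j => σ ((C *ᵥ xb i + D *ᵥ ub i + b) j)) :
    ∀ N : ℕ,
      ∑ i ∈ Finset.range N, (ya i - yb i) ⬝ᵥ X *ᵥ (ya i - yb i) ≤
        ∑ i ∈ Finset.range N, (ua i - ub i) ⬝ᵥ Xm *ᵥ (ua i - ub i) := by
  have hPs : Pᵀ = P := by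
    have := hP.1
    simpa [Matrix.IsHermitian, Matrix.conjTranspose_eq_transpose_of_trivial] using this
  have hdx : ∀ i, xa (i + 1) - xb (i + 1)
      = A *ᵥ (xa i - xb i) + B *ᵥ (ua i - ub i) := by
    intro i
    rw [hxa, hxb, Matrix.mulVec_sub, Matrix.mulVec_sub]
    abel
  have hslope : ∀ i j, 0 ≤ (ya i - yb i) j *
      ((C *ᵥ (xa i - xb i) + D *ᵥ (ua i - ub i)) j - (ya i - yb i) j) := by
    intro i j
    have h := hσ ((C *ᵥ xa i + D *ᵥ ua i + b) j) ((C *ᵥ xb i + D *ᵥ ub i + b) j)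
    rw [hya, hyb]
    simp only [Pi.sub_apply, Pi.add_apply, Matrix.mulVec_sub] at h ⊢
    convert h using 3
    ring
  have key : ∀ N, ∑ i ∈ Finset.range N, (ya i - yb i) ⬝ᵥ X *ᵥ (ya i - yb i)
      + (xa N - xb N) ⬝ᵥ P *ᵥ (xa N - xb N)
      ≤ ∑ i ∈ Finset.range N, (ua i - ub i) ⬝ᵥ Xm *ᵥ (ua i - ub i) := by
    intro N
    induction N with
    | zero => simp [hxa0, hxb0]
    | succ N ih =>
      rw [Finset.sum_range_succ, Finset.sum_range_succ]
      have hs := step_ineq A B C D P hPs Xm X d hd Λ hΛ hLMI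
        (xa N - xb N) (ua N - ub N) (ya N - yb N) (hslope N)
      rw [← hdx N] at hs
      linarith
  intro N
  have := key N
  have hpos := hP.posSemidef.dotProduct_mulVec_nonneg (xa N - xb N)
  simp only [RCLike.re_to_real, star_trivial] at hpos
  linarith
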